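/- The one-point compactification of a locally compact (Hausdorff) cut-point space has no cut points. -/
import Mathlib

open Set OnePoint

set_option linter.unusedSectionVars false

section aux

variable {Y : Type*} [TopologicalSpace Y]

lemma aux_compl_eq {A B : Set Y} {x : Y} (hd : A ∩ B = ∅) (hun : A ∪ B = {x}ᶜ) :
    insert x A = Bᶜ := by
  ext y
  constructor
  · rintro (rfl | hy)
    · intro hyB; exact (hun ▸ (mem_union_right A hyB)) rfl
    · intro hyB; exact (eq_empty_iff_forall_notMem.mp hd y) ⟨hy, hyB⟩
  · intro hy
    by_cases hyx : y = x
    · exact Or.inl hyx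
    · rcases (hun ▸ (mem_compl_singleton_iff.mpr hyx : y ∈ ({x}ᶜ : Set Y)) : y ∈ A ∪ B) with h | h
      · exact Or.inr h
      · exact absurd h hy

/-- If `{x}ᶜ = A ∪ B` with `A, B` disjoint open sets, in a connected space,
then `insert x A` is preconnected. -/
lemma aux_insert_preconnected [ConnectedSpace Y] {A B : Set Y} {x : Y}
    (hA : IsOpen A) (hB : IsOpen B) (hd : A ∩ B = ∅) (hun : A ∪ B = {x}ᶜ) :
    IsPreconnected (insert x A) := by
  have hxA : x ∉ A := fun hx => (hun ▸ (mem_union_left B hx)) rfl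
  have hclosed : IsClosed (insert x A) := (aux_compl_eq hd hun) ▸ hB.isClosed_compl
  have key : ∀ u v : Set Y, IsOpen u → IsOpen v → insert x A ⊆ u ∪ v →
      x ∈ u → insert x A ∩ (u ∩ v) = ∅ → (insert x A ∩ v).Nonempty → False := by
    rintro u v hu hv hcov hxu hne ⟨b, hb⟩
    have hbAv : b ∈ A ∧ b ∈ v := by
      rcases hb.1 with rfl | h
      · exact absurd ⟨hb.1, hxu, hb.2⟩ (eq_empty_iff_forall_notMem.mp hne b)
      · exact ⟨h, hb.2⟩
    set D : Set Y := v ∩ A with hD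
    have hDopen : IsOpen D := hv.inter hA
    have hDclosed : IsClosed D := by
      rw [← closure_subset_iff_isClosed]
      intro y hy
      have hyIA : y ∈ insert x A := by
        have : y ∈ closure (insert x A) :=
          closure_mono (fun z hz => Or.inr hz.2) hy
        rwa [hclosed.closure_eq] at this
      have hnotu : y ∉ u := by
        intro hyu
        obtain ⟨z, hzu, hzv, hzA⟩ := mem_closure_iff.mp hy u hu hyu
        exact (eq_empty_iff_forall_notMem.mp hne z) ⟨Or.inr hzA, hzu, hzv⟩
      rcases hyIA with rfl | hyA
      · exact absurd hxu hnotu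
      · rcases hcov (Or.inr hyA) with h | h
        · exact absurd h hnotu
        · exact ⟨h, hyA⟩
    rcases isClopen_iff.mp ⟨hDclosed, hDopen⟩ with h | h
    · exact (eq_empty_iff_forall_notMem.mp h b) ⟨hbAv.2, hbAv.1⟩
    · exact hxA ((h ▸ (mem_univ x) : x ∈ D)).2
  intro u v hu hv hcov hune hvne
  by_contra hne
  rw [Set.not_nonempty_iff_eq_empty] at hne
  rcases hcov (mem_insert x A) with hxu | hxv
  · exact absurd (key u v hu hv hcov hxu hne hvne) not_false
  · refine absurd (key v u hv hu (by rwa [union_comm]) hxv ?_ hune) not_false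
    rw [inter_comm v u]; exact hne

/-- Extract a separation of `{s}ᶜ` with a chosen point `p` in the second piece. -/
lemma aux_sep [T1Space Y] {s p : Y} (hsp : s ≠ p) (h : ¬ IsPreconnected ({s}ᶜ : Set Y)) :
    ∃ A B : Set Y, IsOpen A ∧ IsOpen B ∧ A ∩ B = ∅ ∧ A ∪ B = {s}ᶜ ∧ A.Nonempty ∧ p ∈ B := by
  rw [IsPreconnected] at h
  push_neg at h
  obtain ⟨u, v, hu, hv, hcov, ⟨a, has, hau⟩, ⟨b, hbs, hbv⟩, hne⟩ := h
  have hopen : IsOpen ({s}ᶜ : Set Y) := isClosed_singleton.isOpen_compl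
  set A0 : Set Y := u ∩ {s}ᶜ with hA0
  set B0 : Set Y := v ∩ {s}ᶜ with hB0
  have hA0o : IsOpen A0 := hu.inter hopen
  have hB0o : IsOpen B0 := hv.inter hopen
  have hdisj : A0 ∩ B0 = ∅ := by
    apply eq_empty_iff_forall_notMem.mpr
    rintro y ⟨⟨hyu, hys⟩, hyv, -⟩
    exact (eq_empty_iff_forall_notMem.mp hne y) ⟨hys, hyu, hyv⟩
  have hunion : A0 ∪ B0 = {s}ᶜ := by
    apply Subset.antisymm
    · rintro y (⟨-, hy⟩ | ⟨-, hy⟩) <;> exact hy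
    · intro y hy
      rcases hcov hy with h | h
      · exact Or.inl ⟨h, hy⟩
      · exact Or.inr ⟨h, hy⟩
  have hps : p ∈ ({s}ᶜ : Set Y) := mem_compl_singleton_iff.mpr hsp.symm
  rcases (hunion ▸ hps : p ∈ A0 ∪ B0) with hp | hp
  · exact ⟨B0, A0, hB0o, hA0o, by rwa [inter_comm], by rwa [union_comm], ⟨b, hbv, hbs⟩, hp⟩
  · exact ⟨A0, B0, hA0o, hB0o, hdisj, hunion, ⟨a, hau, has⟩, hp⟩

end aux

/-- A compact connected Hausdorff space has, for any point `p`, a non-cut point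
distinct from `p`, provided there is a point other than `p`. -/
lemma aux_noncut {S : Type*} [TopologicalSpace S] [CompactSpace S] [T2Space S] [ConnectedSpace S]
    (p q : S) (hq : q ≠ p) :
    ∃ t : S, t ≠ p ∧ IsPreconnected ({t}ᶜ : Set S) := by
  by_contra hcon
  push_neg at hcon
  have hsep : ∀ t : S, t ≠ p → ∃ A B : Set S, IsOpen A ∧ IsOpen B ∧ A ∩ B = ∅ ∧
      A ∪ B = {t}ᶜ ∧ A.Nonempty ∧ p ∈ B :=
    fun t ht => aux_sep ht (hcon t ht)
  choose! A B hAo hBo hABd hABu hAne hpB using hsep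
  have hsAs : ∀ s : S, s ≠ p → s ∉ A s := fun s hsp hs =>
    (hABu s hsp ▸ (mem_union_left (B s) hs)) rfl
  have hpA : ∀ s : S, s ≠ p → p ∉ A s := fun s hsp hp =>
    (eq_empty_iff_forall_notMem.mp (hABd s hsp) p) ⟨hp, hpB s hsp⟩
  have hAp : ∀ s d : S, s ≠ p → d ∈ A s → d ≠ p := fun s d hsp hd hdp =>
    hpA s hsp (hdp ▸ hd)
  have hclosed : ∀ s : S, s ≠ p → IsClosed (insert s (A s)) := fun s hsp =>
    (aux_compl_eq (hABd s hsp) (hABu s hsp)) ▸ (hBo s hsp).isClosed_compl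
  have key : ∀ s d : S, s ≠ p → d ∈ A s → insert d (A d) ⊆ A s := by
    intro s d hsp hd
    have hdp : d ≠ p := hAp s d hsp hd
    have hds : d ≠ s := fun h => hsAs s hsp (h ▸ hd)
    have hconn : IsPreconnected (insert s (B s)) :=
      aux_insert_preconnected (hBo s hsp) (hAo s hsp)
        (by rw [inter_comm]; exact hABd s hsp) (by rw [union_comm]; exact hABu s hsp)
    have hsub : insert s (B s) ⊆ A d ∪ B d := by
      rw [hABu d hdp]
      rintro y (rfl | hy)
      · exact mem_compl_singleton_iff.mpr hds.symm
      · refine mem_compl_singleton_iff.mpr (fun h => ?_)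
        exact (eq_empty_iff_forall_notMem.mp (hABd s hsp) d) ⟨hd, h ▸ hy⟩
    have hBd : insert s (B s) ⊆ B d := by
      rcases hconn.subset_or_subset (hAo d hdp) (hBo d hdp)
        (disjoint_iff_inter_eq_empty.mpr (hABd d hdp)) hsub with h | h
      · exact absurd (h (Or.inr (hpB s hsp))) (hpA d hdp)
      · exact h
    rintro y (rfl | hyA)
    · exact hd
    · have hys : y ≠ s := fun h => (eq_empty_iff_forall_notMem.mp (hABd d hdp) y)
        ⟨hyA, h ▸ hBd (Or.inl rfl)⟩
      have : y ∈ A s ∪ B s := by rw [hABu s hsp]; exact mem_compl_singleton_iff.mpr hys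
      rcases this with h | h
      · exact h
      · exact absurd ⟨hyA, hBd (Or.inr h)⟩ (eq_empty_iff_forall_notMem.mp (hABd d hdp) y)
  set F : Set (Set S) := {T | ∃ s : S, s ≠ p ∧ T = insert s (A s)} with hF
  have hzorn : ∃ M, M ⊆ insert q (A q) ∧ Minimal (· ∈ F) M := by
    apply zorn_superset_nonempty F ?_ _ ⟨q, hq, rfl⟩
    rintro c hcF hchain ⟨T0, hT0⟩
    have hne : ∀ T ∈ c, T.Nonempty := by
      intro T hT; obtain ⟨s, _, rfl⟩ := hcF hT; exact ⟨s, mem_insert _ _⟩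
    have hcl : ∀ T ∈ c, IsClosed T := by
      intro T hT; obtain ⟨s, hs, rfl⟩ := hcF hT; exact hclosed s hs
    have hcomp : ∀ T ∈ c, IsCompact T := fun T hT => (hcl T hT).isCompact
    have hdir : DirectedOn (· ⊇ ·) c := by
      intro T1 h1 T2 h2
      rcases hchain.total h1 h2 with h | h
      · exact ⟨T1, h1, subset_refl _, h⟩
      · exact ⟨T2, h2, h, subset_refl _⟩
    haveI : Nonempty c := ⟨⟨T0, hT0⟩⟩
    obtain ⟨d, hd⟩ :=
      IsCompact.nonempty_sInter_of_directed_nonempty_isCompact_isClosed hdir hne hcomp hcl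
    have hdp : d ≠ p := by
      obtain ⟨s, hs, hTeq⟩ := hcF hT0
      have hdT : d ∈ insert s (A s) := hTeq ▸ (mem_sInter.mp hd _ hT0)
      rcases hdT with rfl | h
      · exact hs
      · exact hAp s d hs h
    refine ⟨insert d (A d), ⟨d, hdp, rfl⟩, ?_⟩
    intro T hT
    obtain ⟨s, hs, rfl⟩ := hcF hT
    rcases mem_sInter.mp hd _ hT with h | h
    · subst h; exact subset_refl _
    · exact (key s d hs h).trans (subset_insert _ _)
  obtain ⟨M, hMsub, hMF, hMmin⟩ := hzorn
  obtain ⟨s, hs, rfl⟩ := hMF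
  obtain ⟨d, hd⟩ := hAne s hs
  have hdp : d ≠ p := hAp s d hs hd
  have hsubset : insert d (A d) ⊆ insert s (A s) := (key s d hs hd).trans (subset_insert _ _)
  have hback : insert s (A s) ⊆ insert d (A d) := hMmin ⟨d, hdp, rfl⟩ hsubset
  rcases hback (mem_insert s (A s)) with h | h
  · exact hsAs s hs (h.symm ▸ hd)
  · exact hsAs s hs (key s d hs hd (Or.inr h))

lemma aux_main {X : Type*} [TopologicalSpace X] [T2Space X] [ConnectedSpace X]
    (hcut : ∀ x : X, ¬ IsPreconnected ({x}ᶜ : Set X)) (x : X) (u v : Set (OnePoint X))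
    (hu : IsOpen u) (hv : IsOpen v)
    (hcov : ({((x : OnePoint X))}ᶜ : Set (OnePoint X)) ⊆ u ∪ v)
    (hvne : (({((x : OnePoint X))}ᶜ : Set (OnePoint X)) ∩ v).Nonempty)
    (hne : ({((x : OnePoint X))}ᶜ : Set (OnePoint X)) ∩ (u ∩ v) = ∅)
    (hinfu : ∞ ∈ u) : False := by
  have hopenx : IsOpen ({x}ᶜ : Set X) := isClosed_singleton.isOpen_compl
  set U' : Set X := ((((↑) : X → OnePoint X)) ⁻¹' u) ∩ {x}ᶜ with hU'
  set V' : Set X := ((((↑) : X → OnePoint X)) ⁻¹' v) ∩ {x}ᶜ with hV'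
  have hU'o : IsOpen U' := (hu.preimage OnePoint.continuous_coe).inter hopenx
  have hV'o : IsOpen V' := (hv.preimage OnePoint.continuous_coe).inter hopenx
  have hcoene : ∀ y : X, y ≠ x →
      ((y : OnePoint X)) ∈ ({((x : OnePoint X))}ᶜ : Set (OnePoint X)) :=
    fun y hy h => hy (OnePoint.coe_injective (mem_singleton_iff.mp h))
  have hdisj : U' ∩ V' = ∅ := by
    apply eq_empty_iff_forall_notMem.mpr
    rintro y ⟨⟨hyu, hyx⟩, hyv, -⟩
    exact (eq_empty_iff_forall_notMem.mp hne (y : OnePoint X))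
      ⟨hcoene y (mem_compl_singleton_iff.mp hyx), hyu, hyv⟩
  have hunion : U' ∪ V' = {x}ᶜ := by
    apply Subset.antisymm
    · rintro y (⟨-, h⟩ | ⟨-, h⟩) <;> exact h
    · intro y hy
      have hyx : y ≠ x := mem_compl_singleton_iff.mp hy
      rcases hcov (hcoene y hyx) with h | h
      · exact Or.inl ⟨h, hy⟩
      · exact Or.inr ⟨h, hy⟩
  have hV'ne : V'.Nonempty := by
    obtain ⟨z, hz1, hz2⟩ := hvne
    cases z using OnePoint.rec with
    | infty => exact absurd ⟨hz1, hinfu, hz2⟩ (eq_empty_iff_forall_notMem.mp hne ∞)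
    | coe w =>
      refine ⟨w, hz2, mem_compl_singleton_iff.mpr (fun h => ?_)⟩
      exact hz1 (mem_singleton_iff.mpr (congrArg _ h))
  set K : Set X := ((((↑) : X → OnePoint X)) ⁻¹' u)ᶜ with hKdef
  have hK : IsCompact K := ((OnePoint.isOpen_iff_of_mem' hinfu).mp hu).1
  have hV'K : V' ⊆ K := by
    rintro y ⟨hyv, hyx⟩ hyu
    exact (eq_empty_iff_forall_notMem.mp hne (y : OnePoint X))
      ⟨hcoene y (mem_compl_singleton_iff.mp hyx), hyu, hyv⟩
  set Sset : Set X := insert x V' with hSset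
  have hScompl : Ssetᶜ = U' := by
    ext y
    simp only [hSset, mem_compl_iff, mem_insert_iff, not_or]
    constructor
    · rintro ⟨hyx, hyV⟩
      rcases (hunion ▸ (mem_compl_singleton_iff.mpr hyx : y ∈ ({x}ᶜ : Set X)) :
        y ∈ U' ∪ V') with h | h
      · exact h
      · exact absurd h hyV
    · intro hy
      exact ⟨mem_compl_singleton_iff.mp hy.2,
        fun hV => (eq_empty_iff_forall_notMem.mp hdisj y) ⟨hy, hV⟩⟩
  have hSclosed : IsClosed Sset := by rw [← isOpen_compl_iff, hScompl]; exact hU'o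
  have hScompact : IsCompact Sset :=
    (hK.insert x).of_isClosed_subset hSclosed (insert_subset_insert hV'K)
  have hSconn : IsPreconnected Sset :=
    aux_insert_preconnected hV'o hU'o (by rw [inter_comm]; exact hdisj)
      (by rw [union_comm]; exact hunion)
  haveI : CompactSpace ↥Sset := isCompact_iff_compactSpace.mp hScompact
  haveI : ConnectedSpace ↥Sset := Subtype.connectedSpace ⟨⟨x, mem_insert _ _⟩, hSconn⟩
  obtain ⟨w0, hw0⟩ := hV'ne
  obtain ⟨t, htp, htconn⟩ := aux_noncut (⟨x, mem_insert _ _⟩ : ↥Sset)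
    ⟨w0, mem_insert_of_mem _ hw0⟩
    (fun h => (mem_compl_singleton_iff.mp hw0.2) (congrArg Subtype.val h))
  set s0 : X := (t : X) with hs0
  have hs0S : s0 ∈ Sset := t.2
  have hs0x : s0 ≠ x := fun h => htp (Subtype.ext h)
  have hs0V : s0 ∈ V' := by
    rcases hs0S with h | h
    · exact absurd h hs0x
    · exact h
  have h1 : IsPreconnected (Subtype.val '' ({t}ᶜ : Set ↥Sset)) :=
    htconn.image _ continuous_subtype_val.continuousOn
  have himg : Subtype.val '' ({t}ᶜ : Set ↥Sset) = Sset \ {s0} := by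
    ext y
    constructor
    · rintro ⟨z, hz, rfl⟩
      exact ⟨z.2, fun h => hz (Subtype.ext (mem_singleton_iff.mp h))⟩
    · rintro ⟨hyS, hys⟩
      exact ⟨⟨y, hyS⟩,
        fun h => hys (mem_singleton_iff.mpr (congrArg Subtype.val h)), rfl⟩
  have h2 : IsPreconnected (insert x U') :=
    aux_insert_preconnected hU'o hV'o hdisj hunion
  have h3 : IsPreconnected (insert x U' ∪ (Sset \ {s0})) :=
    IsPreconnected.union x (mem_insert _ _)
      ⟨mem_insert _ _, fun h => hs0x (mem_singleton_iff.mp h).symm⟩ h2 (himg ▸ h1)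
  have hfinal : insert x U' ∪ (Sset \ {s0}) = ({s0}ᶜ : Set X) := by
    apply Subset.antisymm
    · rintro y (h | h)
      · rcases h with rfl | hyU
        · exact mem_compl_singleton_iff.mpr (fun h => hs0x h.symm)
        · exact mem_compl_singleton_iff.mpr
            (fun h => (eq_empty_iff_forall_notMem.mp hdisj s0) ⟨h ▸ hyU, hs0V⟩)
      · exact h.2
    · intro y hy
      have hys : y ≠ s0 := mem_compl_singleton_iff.mp hy
      by_cases hyx : y = x
      · exact Or.inl (Or.inl hyx)
      · rcases (hunion ▸ (mem_compl_singleton_iff.mpr hyx : y ∈ ({x}ᶜ : Set X)) :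
          y ∈ U' ∪ V') with h | h
        · exact Or.inl (Or.inr h)
        · exact Or.inr ⟨mem_insert_of_mem _ h, fun hh => hys (mem_singleton_iff.mp hh)⟩
  exact hcut s0 (hfinal ▸ h3)

/-- The one-point compactification of a locally compact Hausdorff cut-point space
has no cut points. -/
theorem stmt_5 {X : Type*} [TopologicalSpace X] [T2Space X] [LocallyCompactSpace X]
    [ConnectedSpace X]
    (hcut : ∀ x : X, ¬ IsPreconnected ({x}ᶜ : Set X)) :
    ∀ y : OnePoint X, IsPreconnected ({y}ᶜ : Set (OnePoint X)) := by
  intro y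
  cases y using OnePoint.rec with
  | infty =>
    rw [OnePoint.compl_infty]
    exact isPreconnected_range OnePoint.continuous_coe
  | coe x =>
    by_contra hnc
    rw [IsPreconnected] at hnc
    push_neg at hnc
    obtain ⟨u, v, hu, hv, hcov, hune, hvne, hne⟩ := hnc
    have hinf : (∞ : OnePoint X) ∈ u ∪ v :=
      hcov (mem_compl_singleton_iff.mpr (OnePoint.infty_ne_coe x))
    rcases hinf with h | h
    · exact aux_main hcut x u v hu hv hcov hvne hne h
    · refine aux_main hcut x v u hv hu (by rwa [union_comm]) hune ?_ h
      rw [inter_comm v u]; exact hne
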